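/- Let ω₀, η, κ, β, r, ω_c be real numbers satisfying the characteristic equation −iω_c β − ω_c² + (η − iκω_c)·exp(−iω_c r) + ω₀² = 0, and suppose the complex number D = ω_c² + exp(−iω_c r)·(η + i η r ω_c + κ r ω_c²) + ω₀² is nonzero; set c = D⁻¹. Define, for θ ∈ [−r, 0], the row vector function Ψ₁(θ) = c·( ω₀² + η·exp(−iω_c r), −iω_c )·exp(−iω_c θ) and the column vector functions Φ₁(θ) = (1, iω_c)·exp(iω_c θ) and Φ₂(θ) = (1, −iω_c)·exp(−iω_c θ). Then, with the bilinear form ⟨ψ, φ⟩ = ψ₁(0)φ₁(0) + ψ₂(0)φ₂(0) + ∫_{−r}^{0} ψ₂(s+r)·( −η·φ₁(s) + κ·φ₂(s) ) ds, one has ⟨Ψ₁, Φ₁⟩ = 1 and ⟨Ψ₁, Φ₂⟩ = 0. -/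

import Mathlib

open Real

/-- Bilinear form
`⟨ψ, φ⟩ = ψ₁(0)φ₁(0) + ψ₂(0)φ₂(0) + ∫_{−r}^{0} ψ₂(s+r)(−ηφ₁(s) + κφ₂(s)) ds`
for the two-dimensional delayed van der Pol-type oscillator. -/
noncomputable def pair9 (η κ r : ℝ) (ψ φ : ℝ → ℂ × ℂ) : ℂ :=
  (ψ 0).1 * (φ 0).1 + (ψ 0).2 * (φ 0).2 +
    ∫ s in (-r : ℝ)..0, (ψ (s + r)).2 * (-(η : ℂ) * (φ s).1 + (κ : ℂ) * (φ s).2)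

/-- Adjoint eigenfunction `Ψ₁(θ) = c·(ω₀² + η e^{−iω_c r}, −iω_c)·e^{−iω_c θ}`. -/
noncomputable def Ψ91 (ω0 η r ωc : ℝ) (c : ℂ) (θ : ℝ) : ℂ × ℂ :=
  (c * ((ω0 : ℂ) ^ 2 + (η : ℂ) * Complex.exp (-(Complex.I * ωc * r))) *
      Complex.exp (-(Complex.I * ωc * θ)),
   c * (-(Complex.I * ωc)) * Complex.exp (-(Complex.I * ωc * θ)))

/-- Eigenfunction `Φ₁(θ) = (1, iω_c)·e^{iω_c θ}`. -/
noncomputable def Φ91 (ωc : ℝ) (θ : ℝ) : ℂ × ℂ :=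
  (Complex.exp (Complex.I * ωc * θ), Complex.I * ωc * Complex.exp (Complex.I * ωc * θ))

/-- Eigenfunction `Φ₂(θ) = (1, −iω_c)·e^{−iω_c θ}`. -/
noncomputable def Φ92 (ωc : ℝ) (θ : ℝ) : ℂ × ℂ :=
  (Complex.exp (-(Complex.I * ωc * θ)),
   -(Complex.I * ωc) * Complex.exp (-(Complex.I * ωc * θ)))

/-- Biorthonormality `⟨Ψ₁, Φ₁⟩ = 1`, `⟨Ψ₁, Φ₂⟩ = 0` for the delayed van der Pol-type
oscillator at the verge of instability. -/
theorem stmt_9 (ω0 η κ β r ωc : ℝ)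
    (hchar : -(Complex.I * ωc * β) - (ωc : ℂ) ^ 2 +
        ((η : ℂ) - Complex.I * κ * ωc) * Complex.exp (-(Complex.I * ωc * r)) +
        (ω0 : ℂ) ^ 2 = 0)
    (D : ℂ)
    (hD : D = (ωc : ℂ) ^ 2 +
        Complex.exp (-(Complex.I * ωc * r)) *
          ((η : ℂ) + Complex.I * η * r * ωc + (κ : ℂ) * r * (ωc : ℂ) ^ 2) +
        (ω0 : ℂ) ^ 2)
    (hD0 : D ≠ 0) (c : ℂ) (hc : c = D⁻¹) :
    pair9 η κ r (Ψ91 ω0 η r ωc c) (Φ91 ωc) = 1 ∧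
    pair9 η κ r (Ψ91 ω0 η r ωc c) (Φ92 ωc) = 0 := by
  have hcD : c * D = 1 := by rw [hc]; exact inv_mul_cancel₀ hD0
  have hconj := congrArg (starRingEnd ℂ) hchar
  simp only [map_add, map_sub, map_neg, map_mul, map_pow, Complex.conj_I,
    Complex.conj_ofReal, ← Complex.exp_conj, map_zero] at hconj
  rw [show (-(-Complex.I * (ωc:ℂ) * r)) = Complex.I * ωc * r by ring] at hconj
  set em := Complex.exp (-(Complex.I * ωc * r)) with hem
  set ep := Complex.exp (Complex.I * ωc * r) with hep
  have hme : em * ep = 1 := by rw [hem, hep, ← Complex.exp_add]; simp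
  constructor
  · have hint : (∫ s in (-r:ℝ)..0, (Ψ91 ω0 η r ωc c (s+r)).2 *
        (-(η:ℂ) * (Φ91 ωc s).1 + (κ:ℂ) * (Φ91 ωc s).2)) =
        ∫ s in (-r:ℝ)..0, c * (-(Complex.I*ωc)) * em * (-(η:ℂ) + (κ:ℂ)*(Complex.I*ωc)) := by
      apply intervalIntegral.integral_congr
      intro s _
      simp only [Ψ91, Φ91]
      have h1 : Complex.exp (-(Complex.I * ωc * ((s:ℝ)+(r:ℝ) : ℝ))) * Complex.exp (Complex.I * ωc * s) = em := by
        rw [hem, ← Complex.exp_add]; congr 1; push_cast; ring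
      linear_combination (c * (-(Complex.I*ωc)) * (-(η:ℂ) + (κ:ℂ)*(Complex.I*ωc))) * h1
    simp only [pair9, hint, intervalIntegral.integral_const]
    simp only [Ψ91, Φ91, Complex.ofReal_zero, mul_zero, neg_zero, Complex.exp_zero,
      mul_one, sub_neg_eq_add, zero_add, Complex.real_smul]
    rw [← hem]
    linear_combination hcD - c * hD + (-c*(ωc:ℂ)^2 - (κ:ℂ)*c*em*r*(ωc:ℂ)^2) * Complex.I_sq
  · rcases eq_or_ne ωc 0 with h0 | h0
    · subst h0
      rw [hem] at hchar
      simp only [pair9, Ψ91, Φ92, Complex.ofReal_zero, mul_zero, zero_mul, neg_zero,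
        Complex.exp_zero, mul_one, add_zero] at *
      simp only [intervalIntegral.integral_zero, add_zero]
      linear_combination c * hchar
    · have hωc : (ωc : ℂ) ≠ 0 := Complex.ofReal_ne_zero.mpr h0
      have hne : (-(2 * Complex.I * (ωc:ℂ))) ≠ 0 := by
        simp [Complex.I_ne_zero, hωc]
      have hint : (∫ s in (-r:ℝ)..0, (Ψ91 ω0 η r ωc c (s+r)).2 *
          (-(η:ℂ) * (Φ92 ωc s).1 + (κ:ℂ) * (Φ92 ωc s).2)) =
          c * (-(Complex.I*ωc)) * em * (-(η:ℂ) - (κ:ℂ)*(Complex.I*ωc)) *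
            ((1 - ep^2) / (-(2 * Complex.I * (ωc:ℂ)))) := by
        have hcg : (∫ s in (-r:ℝ)..0, (Ψ91 ω0 η r ωc c (s+r)).2 *
            (-(η:ℂ) * (Φ92 ωc s).1 + (κ:ℂ) * (Φ92 ωc s).2)) =
            ∫ s in (-r:ℝ)..0, c * (-(Complex.I*ωc)) * em * (-(η:ℂ) - (κ:ℂ)*(Complex.I*ωc)) *
              Complex.exp ((-(2 * Complex.I * (ωc:ℂ))) * s) := by
          apply intervalIntegral.integral_congr
          intro s _
          simp only [Ψ91, Φ92]
          have h1 : Complex.exp (-(Complex.I * ωc * ((s:ℝ)+(r:ℝ) : ℝ))) * Complex.exp (-(Complex.I * ωc * s)) =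
              em * Complex.exp ((-(2 * Complex.I * (ωc:ℂ))) * s) := by
            rw [hem, ← Complex.exp_add, ← Complex.exp_add]; congr 1; push_cast; ring
          linear_combination (c * (-(Complex.I*ωc)) * (-(η:ℂ) - (κ:ℂ)*(Complex.I*ωc))) * h1
        rw [hcg, intervalIntegral.integral_const_mul, integral_exp_mul_complex hne]
        congr 1
        rw [div_left_inj' hne]
        congr 1
        · norm_num
        · rw [hep, sq, ← Complex.exp_add]; push_cast; ring_nf
      simp only [pair9, hint]
      simp only [Ψ91, Φ92, Complex.ofReal_zero, mul_zero, neg_zero, Complex.exp_zero, mul_one]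
      rw [← hem]
      field_simp
      linear_combination c * hchar + c * hconj +
        (c*((η:ℂ)+Complex.I*(κ:ℂ)*(ωc:ℂ))*ep) * hme +
        (2*(ωc:ℂ)^2*c) * Complex.I_sq
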